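/- For unit quaternions p and q, the map h ↦ p h q⁻¹ maps the equatorial 2-sphere S² = {h ∈ ℍ : Re h = 0, ‖h‖ = 1} (the set of purely imaginary unit quaternions, i.e., the points of S³ equidistant from 1 and −1) onto itself if and only if p = q or p = −q. -/

import Mathlib

open Quaternion
open scoped Quaternion

private lemma re_mul_comm9 (a b : ℍ[ℝ]) : (a * b).re = (b * a).re := by
  simp only [Quaternion.re_mul]; ring

private lemma conj_mem9 {q h : ℍ[ℝ]} (hq : ‖q‖ = 1) (h0 : h.re = 0) (h1 : ‖h‖ = 1) :
    (q * h * q⁻¹).re = 0 ∧ ‖q * h * q⁻¹‖ = 1 := by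
  have hq0 : q ≠ 0 := by intro h'; simp [h'] at hq
  constructor
  · rw [re_mul_comm9, ← mul_assoc, inv_mul_cancel₀ hq0, one_mul, h0]
  · rw [norm_mul, norm_mul, norm_inv, hq, h1]; norm_num

private def qI : ℍ[ℝ] := ⟨0, 1, 0, 0⟩
private def qJ : ℍ[ℝ] := ⟨0, 0, 1, 0⟩
private def qK : ℍ[ℝ] := ⟨0, 0, 0, 1⟩

private lemma norm_one_of_sq9 {a : ℍ[ℝ]} (h : normSq a = 1) : ‖a‖ = 1 := by
  rw [Quaternion.normSq_eq_norm_mul_self] at h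
  nlinarith [norm_nonneg a]

/-- For unit quaternions `p` and `q`, the map `h ↦ p * h * q⁻¹` maps the equatorial 2-sphere
`S² = {h : Re h = 0, ‖h‖ = 1}` of purely imaginary unit quaternions onto itself
if and only if `p = q` or `p = -q`. -/
theorem stmt9 (p q : ℍ[ℝ]) (hp : ‖p‖ = 1) (hq : ‖q‖ = 1) :
    (fun h : ℍ[ℝ] => p * h * q⁻¹) '' {h : ℍ[ℝ] | h.re = 0 ∧ ‖h‖ = 1}
        = {h : ℍ[ℝ] | h.re = 0 ∧ ‖h‖ = 1}
      ↔ (p = q ∨ p = -q) := by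
  have hq0 : q ≠ 0 := by intro h'; simp [h'] at hq
  constructor
  · intro himg
    set s : ℍ[ℝ] := q⁻¹ * p with hs
    have hmem : ∀ h : ℍ[ℝ], h.re = 0 → ‖h‖ = 1 → (s * h).re = 0 := by
      intro h h0 h1
      have : p * h * q⁻¹ ∈ {h : ℍ[ℝ] | h.re = 0 ∧ ‖h‖ = 1} := by
        rw [← himg]; exact Set.mem_image_of_mem _ ⟨h0, h1⟩
      have hre := this.1
      rw [re_mul_comm9, ← mul_assoc] at hre
      exact hre
    have hI : qI.re = 0 ∧ ‖qI‖ = 1 :=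
      ⟨rfl, norm_one_of_sq9 (by rw [Quaternion.normSq_def']; simp [qI])⟩
    have hJ : qJ.re = 0 ∧ ‖qJ‖ = 1 :=
      ⟨rfl, norm_one_of_sq9 (by rw [Quaternion.normSq_def']; simp [qJ])⟩
    have hK : qK.re = 0 ∧ ‖qK‖ = 1 :=
      ⟨rfl, norm_one_of_sq9 (by rw [Quaternion.normSq_def']; simp [qK])⟩
    have e1 := hmem _ hI.1 hI.2
    have e2 := hmem _ hJ.1 hJ.2
    have e3 := hmem _ hK.1 hK.2
    simp only [Quaternion.re_mul] at e1 e2 e3; simp only [qI, qJ, qK] at e1 e2 e3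
    have hi : s.imI = 0 := by simpa using e1
    have hj : s.imJ = 0 := by simpa using e2
    have hk : s.imK = 0 := by simpa using e3
    have hns : ‖s‖ = 1 := by rw [hs, norm_mul, norm_inv, hq, hp]; norm_num
    have hsq : s.re * s.re = 1 := by
      have h2 : normSq s = 1 := by
        rw [Quaternion.normSq_eq_norm_mul_self, hns]; norm_num
      rw [Quaternion.normSq_def', hi, hj, hk] at h2
      nlinarith
    have hps : q * s = p := by rw [hs, ← mul_assoc, mul_inv_cancel₀ hq0, one_mul]
    rcases mul_self_eq_one_iff.mp hsq with hr | hr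
    · left
      have : s = 1 := by ext <;> simp [hr, hi, hj, hk]
      rw [← hps, this, mul_one]
    · right
      have : s = -1 := by ext <;> simp [hr, hi, hj, hk]
      rw [← hps, this, mul_neg_one]
  · intro hpq
    have hqinv : ‖q⁻¹‖ = 1 := by rw [norm_inv, hq]; norm_num
    have key : ∀ x : ℍ[ℝ], x.re = 0 → ‖x‖ = 1 →
        q * (q⁻¹ * x * q) * q⁻¹ = x := by
      intro x _ _
      rw [← mul_assoc, ← mul_assoc, mul_inv_cancel₀ hq0, one_mul, mul_assoc,
        mul_inv_cancel₀ hq0, mul_one]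
    have hconj_inv : ∀ x : ℍ[ℝ], x.re = 0 → ‖x‖ = 1 →
        (q⁻¹ * x * q).re = 0 ∧ ‖q⁻¹ * x * q‖ = 1 := by
      intro x h0 h1
      have := conj_mem9 hqinv h0 h1
      rwa [inv_inv] at this
    rcases hpq with h1 | h1 <;> rw [h1]
    · ext x
      simp only [Set.mem_image, Set.mem_setOf_eq]
      constructor
      · rintro ⟨h, ⟨h0, h1⟩, rfl⟩
        exact conj_mem9 hq h0 h1
      · rintro ⟨x0, x1⟩
        exact ⟨q⁻¹ * x * q, hconj_inv x x0 x1, key x x0 x1⟩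
    · ext x
      simp only [Set.mem_image, Set.mem_setOf_eq]
      constructor
      · rintro ⟨h, ⟨h0, h1⟩, rfl⟩
        have hc := conj_mem9 hq h0 h1
        have heq : (-q) * h * q⁻¹ = -(q * h * q⁻¹) := by
          rw [neg_mul, neg_mul]
        exact ⟨by rw [heq, Quaternion.re_neg, hc.1, neg_zero],
          by rw [heq, norm_neg]; exact hc.2⟩
      · rintro ⟨x0, x1⟩
        refine ⟨-(q⁻¹ * x * q), ?_, ?_⟩
        · have := hconj_inv x x0 x1
          exact ⟨by rw [Quaternion.re_neg, this.1, neg_zero], by rw [norm_neg]; exact this.2⟩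
        · rw [neg_mul_neg]; exact key x x0 x1
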